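/- arXiv:2202.13132 — 5 statements merged into one kernel-verified Lean document; each statement's English description precedes it below -/
import Mathlib

section
/- Artin gluing: let F : B ⥤ C be a functor between categories where C has pullbacks. Define gl(F) : (C ↓ F) ⥤ B to be the projection of the comma category of objects (c : C, b : B, v : c ⟶ F.obj b). Then gl(F) is both a cocartesian fibration (cocartesian lift of u : b ⟶ b' at (c, b, v) given by post-composing with F.map u) and a cartesian fibration (cartesian lift of u at (c', b', w) given by the pullback of w along F.map u). -/
open CategoryTheory CategoryTheory.Limits

/-- An arrow of the total category is cocartesian for the functor `F`. -/
def IsCocartArrow {E B : Type*} [Category E] [Category B] (F : E ⥤ B)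
    {e e' : E} (f : e ⟶ e') : Prop :=
  ∀ (e'' : E) (v : F.obj e' ⟶ F.obj e'') (h : e ⟶ e''),
    F.map h = F.map f ≫ v → ∃! g : e' ⟶ e'', F.map g = v ∧ f ≫ g = h

/-- An arrow of the total category is cartesian for the functor `F`. -/
def IsCartArrow {E B : Type*} [Category E] [Category B] (F : E ⥤ B)
    {e e' : E} (f : e ⟶ e') : Prop :=
  ∀ (e'' : E) (v : F.obj e'' ⟶ F.obj e) (h : e'' ⟶ e'),
    F.map h = v ≫ F.map f → ∃! g : e'' ⟶ e, F.map g = v ∧ g ≫ f = h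

/-- The Artin gluing `gl(F) : (C ↓ F) ⥤ B` is a cocartesian fibration (lifts by
post-composition with `F.map u`) and a cartesian fibration (lifts by pullback
along `F.map u`). -/
theorem stmt9 {B C : Type*} [Category B] [Category C] [HasPullbacks C]
    (F : B ⥤ C) :
    (∀ (X : Comma (𝟭 C) F) {b' : B} (u : X.right ⟶ b'),
      IsCocartArrow (Comma.snd (𝟭 C) F)
        ((⟨𝟙 X.left, u, by simp⟩ :
          X ⟶ (⟨X.left, b', X.hom ≫ F.map u⟩ : Comma (𝟭 C) F)))) ∧
    (∀ (Y : Comma (𝟭 C) F) {b : B} (u : b ⟶ Y.right),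
      IsCartArrow (Comma.snd (𝟭 C) F)
        ((⟨pullback.fst Y.hom (F.map u), u, by simpa using pullback.condition⟩ :
          (⟨pullback Y.hom (F.map u), b, pullback.snd Y.hom (F.map u)⟩ :
            Comma (𝟭 C) F) ⟶ Y))) := by
  constructor
  · intro X b' u X'' v h hv
    simp only [Comma.snd_map] at hv
    refine ⟨⟨h.left, v, ?_⟩, ⟨rfl, ?_⟩, ?_⟩
    · have := h.w
      simp only [Functor.id_map] at this ⊢
      rw [Category.assoc, ← F.map_comp, ← hv, this]
    · ext <;> simp [hv]
    · rintro g' ⟨hg1, hg2⟩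
      have hl : g'.left = h.left := by
        have := congrArg CommaMorphism.left hg2
        simpa using this
      ext
      · exact hl
      · simpa [Comma.snd_map] using hg1
  · intro Y b u X'' v h hv
    simp only [Comma.snd_map] at hv
    have hw : h.left ≫ Y.hom = X''.hom ≫ F.map v ≫ F.map u := by
      have := h.w
      simp only [Functor.id_map] at this
      rw [this, hv, F.map_comp]
    refine ⟨⟨pullback.lift h.left (X''.hom ≫ F.map v) (by simpa using hw), v, ?_⟩,
      ⟨rfl, ?_⟩, ?_⟩
    · exact pullback.lift_snd _ _ _
    · ext
      · exact pullback.lift_fst _ _ _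
      · simp [hv]
    · rintro g' ⟨hg1, hg2⟩
      simp only [Comma.snd_map] at hg1
      have hfst : g'.left ≫ pullback.fst Y.hom (F.map u) = h.left := by
        have := congrArg CommaMorphism.left hg2
        simpa using this
      have hsnd : g'.left ≫ pullback.snd Y.hom (F.map u) = X''.hom ≫ F.map v := by
        have := g'.w
        simp only [Functor.id_map] at this
        rw [this, hg1]
      ext <;> simp [hfst, hsnd, hg1]
      · exact (pullback.lift_fst _ _ _).symm
      · exact (pullback.lift_snd _ _ _).symm
end

section
/- The gluing fibration detects pullback-preservation: let B and C be categories with pullbacks and F : B ⥤ C a functor. Then F preserves pullbacks if and only if the bicartesian fibration gl(F) : (C ↓ F) ⥤ B satisfies the Beck–Chevalley condition: for every square in C ↓ F lying over a pullback square in B, if the bottom arrow is cocartesian and the two vertical arrows are cartesian, then the top arrow is cocartesian. -/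
open CategoryTheory CategoryTheory.Limits

section Aux

variable {B C : Type*} [Category B] [Category C]

/-- The comparison map between two pullbacks of the same cospan is an isomorphism. -/
lemma aux_isIso_of_two_pullbacks {P P' X Y Z : C} {a : P ⟶ X} {b : P ⟶ Y}
    {a' : P' ⟶ X} {b' : P' ⟶ Y} {f : X ⟶ Z} {g : Y ⟶ Z}
    (h : IsPullback a b f g) (h' : IsPullback a' b' f g)
    (m : P ⟶ P') (ha : m ≫ a' = a) (hb : m ≫ b' = b) : IsIso m := by
  refine ⟨h.lift a' b' h'.w, ?_, ?_⟩
  · apply h.hom_ext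
    · rw [Category.assoc, h.lift_fst, ha, Category.id_comp]
    · rw [Category.assoc, h.lift_snd, hb, Category.id_comp]
  · apply h'.hom_ext
    · rw [Category.assoc, ha, h.lift_fst, Category.id_comp]
    · rw [Category.assoc, hb, h.lift_snd, Category.id_comp]

/-- Replace one corner of a pullback square along an isomorphism. -/
lemma aux_isPullback_corner {P X X' Y Z : C} {a : P ⟶ X} {b : P ⟶ Y} {f : X ⟶ Z} {g : Y ⟶ Z}
    (h : IsPullback a b f g) (e : X ⟶ X') [IsIso e] {f' : X' ⟶ Z} (hf : f = e ≫ f') :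
    IsPullback (a ≫ e) b f' g :=
  h.of_iso (Iso.refl _) (asIso e) (Iso.refl _) (Iso.refl _) (by simp) (by simp)
    (by simp [hf]) (by simp)

/-- Precompose the legs of a pullback square with an isomorphism. -/
lemma aux_isPullback_precomp {P Q X Y Z : C} {a : P ⟶ X} {b : P ⟶ Y} {f : X ⟶ Z} {g : Y ⟶ Z}
    (h : IsPullback a b f g) (m : Q ⟶ P) [IsIso m] : IsPullback (m ≫ a) (m ≫ b) f g :=
  h.of_iso (asIso m).symm (Iso.refl _) (Iso.refl _) (Iso.refl _) (by simp) (by simp)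
    (by simp) (by simp)

variable (F : B ⥤ C)

/-- An arrow of the gluing fibration is cocartesian iff its left component is an iso. -/
lemma aux_cocart_iff {X Y : Comma (𝟭 C) F} (f : X ⟶ Y) :
    IsCocartArrow (Comma.snd (𝟭 C) F) f ↔ IsIso f.left := by
  constructor
  · intro hc
    obtain ⟨g, ⟨hg1, hg2⟩, -⟩ := hc ⟨X.left, Y.right, X.hom ≫ F.map f.right⟩ (𝟙 Y.right)
      ⟨𝟙 X.left, f.right, by simp⟩ (by simp; exact (Category.comp_id _).symm)
    simp only [Comma.snd_map] at hg1
    have hfg : f.left ≫ g.left = 𝟙 X.left := by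
      have := congrArg CommaMorphism.left hg2
      simpa using this
    have hgw : g.left ≫ X.hom ≫ F.map f.right = Y.hom := by
      have := g.w
      simp only [Functor.id_map, hg1, F.map_id, Category.comp_id] at this
      simpa using this
    obtain ⟨g', -, hg'uniq⟩ := hc Y (𝟙 Y.right) f (by simp; exact (Category.comp_id _).symm)
    have hc1 : (⟨g.left ≫ f.left, 𝟙 Y.right, by
        have hfw := f.w
        simp only [Functor.id_map] at hfw
        simp only [Functor.id_map, F.map_id, Category.comp_id, Category.assoc, hfw, hgw]⟩ :
        Y ⟶ Y) = g' := by
      apply hg'uniq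
      constructor
      · simp
      · apply CommaMorphism.ext
        · simpa using by rw [← Category.assoc, hfg, Category.id_comp]
        · simp
    have hc2 : (𝟙 Y) = g' := by
      apply hg'uniq
      exact ⟨by simp, by simp⟩
    have : g.left ≫ f.left = 𝟙 Y.left := by
      have := hc1.trans hc2.symm
      simpa using congrArg CommaMorphism.left this
    exact ⟨g.left, hfg, this⟩
  · intro hiso e'' v h hcond
    simp only [Comma.snd_map] at hcond
    have hfw : f.left ≫ Y.hom = X.hom ≫ F.map f.right := by simpa using f.w
    have hhw : h.left ≫ e''.hom = X.hom ≫ F.map h.right := by simpa using h.w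
    have hw' : (inv f.left ≫ h.left) ≫ e''.hom = Y.hom ≫ F.map v := by
      rw [Category.assoc, IsIso.inv_comp_eq, hhw, hcond, F.map_comp, ← Category.assoc, ← hfw,
        Category.assoc]
    refine ⟨⟨inv f.left ≫ h.left, v, by simpa using hw'⟩, ⟨by simp, ?_⟩, ?_⟩
    · apply CommaMorphism.ext
      · simp
      · simpa using hcond.symm
    · rintro g' ⟨hg'1, hg'2⟩
      simp only [Comma.snd_map] at hg'1
      apply CommaMorphism.ext
      · have := congrArg CommaMorphism.left hg'2
        simp only [Comma.comp_left] at this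
        simp [← this]
      · simpa using hg'1

/-- An arrow of the gluing fibration is cartesian iff its structure square is a pullback. -/
lemma aux_cart_iff [HasPullbacks C] {X Y : Comma (𝟭 C) F} (f : X ⟶ Y) :
    IsCartArrow (Comma.snd (𝟭 C) F) f ↔ IsPullback f.left X.hom Y.hom (F.map f.right) := by
  have hfw : f.left ≫ Y.hom = X.hom ≫ F.map f.right := by simpa using f.w
  constructor
  · intro hc
    obtain ⟨g, ⟨hg1, hg2⟩, -⟩ := hc ⟨pullback Y.hom (F.map f.right), X.right,
        pullback.snd _ _⟩ (𝟙 X.right)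
      ⟨pullback.fst _ _, f.right, by simpa using pullback.condition⟩ (by simp; exact (Category.id_comp _).symm)
    simp only [Comma.snd_map] at hg1
    set m : X.left ⟶ pullback Y.hom (F.map f.right) := pullback.lift f.left X.hom hfw with hm
    have hgf : g.left ≫ f.left = pullback.fst _ _ := by
      have := congrArg CommaMorphism.left hg2
      simpa using this
    have hgsnd : g.left ≫ X.hom = pullback.snd _ _ := by
      have := g.w
      simp only [Functor.id_map, hg1, F.map_id, Category.comp_id] at this
      simpa using this
    have hgm : g.left ≫ m = 𝟙 _ := by
      apply pullback.hom_ext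
      · rw [Category.assoc, hm, pullback.lift_fst, hgf, Category.id_comp]
      · rw [Category.assoc, hm, pullback.lift_snd, hgsnd, Category.id_comp]
    have hmg : m ≫ g.left = 𝟙 _ := by
      obtain ⟨g', -, hg'uniq⟩ := hc X (𝟙 X.right) f (by simp; exact (Category.id_comp _).symm)
      have hc1 : (⟨m ≫ g.left, 𝟙 X.right, by
          simp only [Functor.id_map, F.map_id, Category.comp_id, Category.assoc, hgsnd, hm,
            pullback.lift_snd]⟩ : X ⟶ X) = g' := by
        apply hg'uniq
        constructor
        · simp
        · apply CommaMorphism.ext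
          · simp only [Comma.comp_left, Category.assoc, hgf]
            simpa using pullback.lift_fst _ _ _
          · simp
      have hc2 : (𝟙 X) = g' := hg'uniq _ ⟨by simp, by simp⟩
      simpa using congrArg CommaMorphism.left (hc1.trans hc2.symm)
    have : IsIso m := ⟨g.left, hmg, hgm⟩
    exact IsPullback.of_iso_pullback ⟨hfw⟩ (asIso m) (pullback.lift_fst _ _ _)
      (pullback.lift_snd _ _ _)
  · intro hp e'' v h hcond
    simp only [Comma.snd_map] at hcond
    have hhw : h.left ≫ Y.hom = e''.hom ≫ F.map h.right := by simpa using h.w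
    have hwl : h.left ≫ Y.hom = (e''.hom ≫ F.map v) ≫ F.map f.right := by
      rw [hhw, hcond, F.map_comp, Category.assoc]
    refine ⟨⟨hp.lift h.left (e''.hom ≫ F.map v) hwl, v, by
        simpa using (hp.lift_snd h.left (e''.hom ≫ F.map v) hwl).symm ▸ rfl⟩, ⟨by simp, ?_⟩, ?_⟩
    · apply CommaMorphism.ext
      · simpa using hp.lift_fst h.left (e''.hom ≫ F.map v) hwl
      · simpa using hcond.symm
    · rintro g' ⟨hg'1, hg'2⟩
      simp only [Comma.snd_map] at hg'1
      apply CommaMorphism.ext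
      · apply hp.hom_ext
        · have := congrArg CommaMorphism.left hg'2
          simp only [Comma.comp_left] at this
          rw [hp.lift_fst]
          simpa using this
        · have := g'.w
          simp only [Functor.id_map, hg'1] at this
          rw [hp.lift_snd]
          simpa using this
      · simpa using hg'1

end Aux

/-- `F` preserves pullbacks iff the Artin gluing fibration `gl(F) : (C ↓ F) ⥤ B`
satisfies the Beck–Chevalley condition: over every pullback square in `B`, if the
bottom arrow is cocartesian and the two vertical arrows are cartesian, then the
top arrow is cocartesian. -/
theorem stmt10 {B C : Type*} [Category B] [Category C]
    [HasPullbacks B] [HasPullbacks C] (F : B ⥤ C) :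
    (∀ {p x y z : B} (fst : p ⟶ x) (snd : p ⟶ y) (f : x ⟶ z) (g : y ⟶ z),
      IsPullback fst snd f g →
      IsPullback (F.map fst) (F.map snd) (F.map f) (F.map g)) ↔
    (∀ {W X Y Z : Comma (𝟭 C) F} (t : W ⟶ X) (l : W ⟶ Y) (r : X ⟶ Z) (bo : Y ⟶ Z),
      t ≫ r = l ≫ bo →
      IsPullback ((Comma.snd (𝟭 C) F).map t) ((Comma.snd (𝟭 C) F).map l)
        ((Comma.snd (𝟭 C) F).map r) ((Comma.snd (𝟭 C) F).map bo) →
      IsCocartArrow (Comma.snd (𝟭 C) F) bo →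
      IsCartArrow (Comma.snd (𝟭 C) F) l →
      IsCartArrow (Comma.snd (𝟭 C) F) r →
      IsCocartArrow (Comma.snd (𝟭 C) F) t) := by
  constructor
  · intro hpres W X Y Z t l r bo hsq hbase hbo hl hr
    simp only [Comma.snd_map] at hbase
    rw [aux_cocart_iff] at hbo ⊢
    rw [aux_cart_iff] at hl hr
    haveI := hbo
    have Pp := hpres _ _ _ _ hbase
    have Big : IsPullback l.left (W.hom ≫ F.map t.right) (Y.hom ≫ F.map bo.right)
        (F.map r.right) := hl.paste_vert Pp.flip
    have hZhom : Z.hom = inv bo.left ≫ (Y.hom ≫ F.map bo.right) := by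
      have := bo.w
      simp only [Functor.id_map] at this
      rw [← this, IsIso.inv_hom_id_assoc]
    have R' : IsPullback (r.left ≫ inv bo.left) X.hom (Y.hom ≫ F.map bo.right)
        (F.map r.right) := aux_isPullback_corner hr (inv bo.left) hZhom
    have hleft : t.left ≫ r.left = l.left ≫ bo.left := by
      simpa using congrArg CommaMorphism.left hsq
    refine aux_isIso_of_two_pullbacks Big R' t.left ?_ ?_
    · rw [← Category.assoc, hleft, Category.assoc, IsIso.hom_inv_id, Category.comp_id]
    · simpa using t.w
  · intro hbc p x y z fst snd f g hpb
    have hmap : F.map snd ≫ F.map g = F.map fst ≫ F.map f := by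
      rw [← F.map_comp, ← F.map_comp, hpb.w]
    set m : F.obj p ⟶ pullback (F.map g) (F.map f) :=
      pullback.lift (F.map snd) (F.map fst) hmap with hm
    let Wo : Comma (𝟭 C) F := ⟨F.obj p, p, 𝟙 _⟩
    let Xo : Comma (𝟭 C) F := ⟨pullback (F.map g) (F.map f), x, pullback.snd _ _⟩
    let Yo : Comma (𝟭 C) F := ⟨F.obj y, y, 𝟙 _⟩
    let Zo : Comma (𝟭 C) F := ⟨F.obj y, z, F.map g⟩
    let t : Wo ⟶ Xo := ⟨m, fst, by simp [Wo, Xo, hm]; exact pullback.lift_snd _ _ _⟩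
    let l : Wo ⟶ Yo := ⟨F.map snd, snd, by simp [Wo, Yo]⟩
    let r : Xo ⟶ Zo := ⟨pullback.fst _ _, f, by simpa [Xo, Zo] using pullback.condition⟩
    let bo : Yo ⟶ Zo := ⟨𝟙 _, g, by simp [Yo, Zo]⟩
    have hsq : t ≫ r = l ≫ bo := by
      apply CommaMorphism.ext
      · show m ≫ pullback.fst (F.map g) (F.map f) = F.map snd ≫ 𝟙 (F.obj y)
        rw [hm, pullback.lift_fst, Category.comp_id]
      · show fst ≫ f = snd ≫ g
        exact hpb.w
    have hbase' : IsPullback ((Comma.snd (𝟭 C) F).map t) ((Comma.snd (𝟭 C) F).map l)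
        ((Comma.snd (𝟭 C) F).map r) ((Comma.snd (𝟭 C) F).map bo) := hpb
    have hbo' : IsCocartArrow (Comma.snd (𝟭 C) F) bo := by
      rw [aux_cocart_iff]
      exact inferInstanceAs (IsIso (𝟙 (F.obj y)))
    have hl' : IsCartArrow (Comma.snd (𝟭 C) F) l := by
      rw [aux_cart_iff]
      exact IsPullback.of_vert_isIso (fst := F.map snd) (snd := 𝟙 (F.obj p))
        (f := 𝟙 (F.obj y)) (g := F.map snd) ⟨by simp⟩
    have hr' : IsCartArrow (Comma.snd (𝟭 C) F) r := by
      rw [aux_cart_iff]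
      exact IsPullback.of_hasPullback (F.map g) (F.map f)
    have hco := hbc t l r bo hsq hbase' hbo' hl' hr'
    have hiso : IsIso m := (aux_cocart_iff F t).1 hco
    haveI := hiso
    have h2 := aux_isPullback_precomp (IsPullback.of_hasPullback (F.map g) (F.map f)).flip m
    rw [hm] at h2
    convert h2 using 1
    · exact (pullback.lift_snd _ _ _).symm
    · exact (pullback.lift_fst _ _ _).symm
end

section
/- In a fibration with stable and disjoint internal sums, left cancellation of cocartesian arrows holds: let π : E ⥤ B be a bicartesian fibration over a category B with pullbacks, such that (i) E has pullbacks of cocartesian arrows along arbitrary arrows and cocartesian arrows are stable under such pullbacks, and (ii) for every cocartesian f : d ⟶ e the diagonal d ⟶ d ×_e d is cocartesian. Then whenever g and g ∘ f are cocartesian, f is cocartesian. -/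
open CategoryTheory CategoryTheory.Limits

/-- `π` is a Grothendieck opfibration: cocartesian lifts exist. -/
def HasCocartLifts {E B : Type*} [Category E] [Category B] (π : E ⥤ B) : Prop :=
  ∀ (e : E) ⦃b' : B⦄ (u : π.obj e ⟶ b'),
    ∃ (e' : E) (h : π.obj e' = b') (f : e ⟶ e'),
      π.map f = u ≫ eqToHom h.symm ∧ IsCocartArrow π f

/-- `π` is a Grothendieck fibration: cartesian lifts exist. -/
def HasCartLifts {E B : Type*} [Category E] [Category B] (π : E ⥤ B) : Prop :=
  ∀ (e : E) ⦃b : B⦄ (u : b ⟶ π.obj e),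
    ∃ (e' : E) (h : π.obj e' = b) (f : e' ⟶ e),
      π.map f = eqToHom h ≫ u ∧ IsCartArrow π f


lemma IsCocartArrow.comp {E B : Type*} [Category E] [Category B] (π : E ⥤ B)
    {d e e' : E} {f : d ⟶ e} {g : e ⟶ e'}
    (hf : IsCocartArrow π f) (hg : IsCocartArrow π g) :
    IsCocartArrow π (f ≫ g) := by
  intro x v h hv
  rw [π.map_comp, Category.assoc] at hv
  obtain ⟨k, ⟨hk1, hk2⟩, hkU⟩ := hf x (π.map g ≫ v) h hv
  obtain ⟨l, ⟨hl1, hl2⟩, hlU⟩ := hg x v k hk1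
  refine ⟨l, ⟨hl1, by rw [Category.assoc, hl2, hk2]⟩, ?_⟩
  rintro l' ⟨hl1', hl2'⟩
  have hk' : g ≫ l' = k := hkU (g ≫ l') ⟨by rw [π.map_comp, hl1'], by
    rw [← Category.assoc]; exact hl2'⟩
  exact hlU l' ⟨hl1', hk'⟩

lemma IsCocartArrow.of_iso_comp {E B : Type*} [Category E] [Category B] (π : E ⥤ B)
    {x d e : E} {j : x ⟶ d} {c : d ⟶ x} {f : d ⟶ e}
    (hjc : j ≫ c = 𝟙 x) (hcj : c ≫ j = 𝟙 d)
    (hf : IsCocartArrow π f) : IsCocartArrow π (j ≫ f) := by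
  intro y v h hv
  have hv' : π.map (c ≫ h) = π.map f ≫ v := by
    rw [π.map_comp, hv, π.map_comp, ← Category.assoc, ← Category.assoc,
      ← π.map_comp, hcj, π.map_id, Category.id_comp]
  obtain ⟨k, ⟨hk1, hk2⟩, hkU⟩ := hf y v (c ≫ h) hv'
  refine ⟨k, ⟨hk1, by rw [Category.assoc, hk2, ← Category.assoc, hjc,
    Category.id_comp]⟩, ?_⟩
  rintro k' ⟨hk1', hk2'⟩
  exact hkU k' ⟨hk1', by rw [← hk2', ← Category.assoc, ← Category.assoc, hcj,
    Category.id_comp]⟩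

/-- In a bicartesian fibration with stable and disjoint internal sums,
cocartesian arrows satisfy left cancellation. -/
theorem stmt12 {E B : Type*} [Category E] [Category B] [HasPullbacks B]
    (π : E ⥤ B) (h₁ : HasCocartLifts π) (h₂ : HasCartLifts π)
    (stable : ∀ {d e x : E} (f : d ⟶ e) (h : x ⟶ e), IsCocartArrow π f →
      ∃ (p : E) (fst : p ⟶ d) (snd : p ⟶ x),
        IsPullback fst snd f h ∧ IsCocartArrow π snd)
    (disjoint : ∀ {d e : E} (f : d ⟶ e), IsCocartArrow π f →
      ∀ {p : E} (fst snd : p ⟶ d), IsPullback fst snd f f →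
      ∀ (δ : d ⟶ p), δ ≫ fst = 𝟙 d → δ ≫ snd = 𝟙 d → IsCocartArrow π δ)
    {d e e' : E} (f : d ⟶ e) (g : e ⟶ e')
    (hg : IsCocartArrow π g) (hgf : IsCocartArrow π (f ≫ g)) :
    IsCocartArrow π f := by

  -- pull back `g` along `g`
  obtain ⟨p, p1, p2, hpb, hp2⟩ := stable g g hg
  -- pull back `f ≫ g` along `g`
  obtain ⟨q, qfst, qsnd, hq, hqsnd⟩ := stable (f ≫ g) g hgf
  -- the diagonal of `g`, cocartesian by disjointness
  set δ : e ⟶ p := hpb.lift (𝟙 e) (𝟙 e) rfl with hδdef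
  have hδ : IsCocartArrow π δ :=
    disjoint g hg p1 p2 hpb δ (hpb.lift_fst _ _ _) (hpb.lift_snd _ _ _)
  -- the comparison map `τ : q ⟶ p`
  have hτw : (qfst ≫ f) ≫ g = qsnd ≫ g := by rw [Category.assoc, hq.w]
  set τ : q ⟶ p := hpb.lift (qfst ≫ f) qsnd hτw with hτdef
  -- the section `σ : d ⟶ q`
  set σ : d ⟶ q := hq.lift (𝟙 d) f (by simp) with hσdef
  have hσfst : σ ≫ qfst = 𝟙 d := hq.lift_fst _ _ _
  have hσsnd : σ ≫ qsnd = f := hq.lift_snd _ _ _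
  -- the square `f ≫ δ = σ ≫ τ`
  have hw : f ≫ δ = σ ≫ τ := by
    apply hpb.hom_ext
    · rw [Category.assoc, Category.assoc, hpb.lift_fst, hpb.lift_fst,
        Category.comp_id, ← Category.assoc, hσfst, Category.id_comp]
    · rw [Category.assoc, Category.assoc, hpb.lift_snd, hpb.lift_snd,
        Category.comp_id, hσsnd]
  -- pull back the diagonal `δ` along `τ`
  obtain ⟨p', fst', snd', hpb', hsnd'⟩ := stable δ τ hδ
  set j : d ⟶ p' := hpb'.lift f σ hw with hjdef
  have hjfst : j ≫ fst' = f := hpb'.lift_fst _ _ _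
  have hjsnd : j ≫ snd' = σ := hpb'.lift_snd _ _ _
  set c : p' ⟶ d := snd' ≫ qfst with hcdef
  have hcf : c ≫ f = fst' := by
    have h1 : qfst ≫ f = τ ≫ p1 := (hpb.lift_fst _ _ _).symm
    rw [hcdef, Category.assoc, h1, ← Category.assoc, ← hpb'.w, Category.assoc,
      hpb.lift_fst, Category.comp_id]
  have hcσ : c ≫ σ = snd' := by
    apply hq.hom_ext
    · rw [Category.assoc, hσfst, Category.comp_id]
    · rw [Category.assoc, hσsnd, hcf]
      have h2 : qsnd = τ ≫ p2 := (hpb.lift_snd _ _ _).symm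
      rw [h2, ← Category.assoc, ← hpb'.w, Category.assoc, hpb.lift_snd,
        Category.comp_id]
  have hjc : j ≫ c = 𝟙 d := by
    rw [hcdef, ← Category.assoc, hjsnd, hσfst]
  have hcj : c ≫ j = 𝟙 p' := by
    apply hpb'.hom_ext
    · rw [Category.assoc, hjfst, hcf, Category.id_comp]
    · rw [Category.assoc, hjsnd, hcσ, Category.id_comp]
  have hσcocart : IsCocartArrow π σ := by
    rw [← hjsnd]
    exact IsCocartArrow.of_iso_comp π hjc hcj hsnd'
  rw [← hσsnd]
  exact IsCocartArrow.comp π hσcocart hqsnd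
end

section
/- Conservativity criterion for disjointness: let π : E ⥤ B be a bicartesian fibration with stable internal sums (pullbacks of cocartesian arrows along arbitrary arrows exist and are cocartesian). Then cocartesian arrows satisfy left cancellation (g and g∘f cocartesian imply f cocartesian) if and only if: whenever k is a vertical arrow (π maps it to an identity/isomorphism) and both f and f∘k are cocartesian, then k is an isomorphism. -/
open CategoryTheory CategoryTheory.Limits

/-- A cocartesian arrow which is vertical is an isomorphism. -/
lemma vertCocartIso {E B : Type*} [Category E] [Category B] (π : E ⥤ B)
    {x y : E} (k : x ⟶ y) (hv : IsIso (π.map k)) (hc : IsCocartArrow π k) :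
    IsIso k := by
  obtain ⟨g, ⟨hg1, hg2⟩, _⟩ := hc x (inv (π.map k)) (𝟙 x) (by simp)
  obtain ⟨g', _, huniq⟩ := hc y (𝟙 (π.obj y)) k (by simp)
  refine ⟨g, hg2, ?_⟩
  have e1 : g ≫ k = g' := huniq _ ⟨by simp [hg1], by rw [← Category.assoc, hg2, Category.id_comp]⟩
  have e2 : 𝟙 y = g' := huniq _ ⟨by simp, by simp⟩
  rw [e1, ← e2]

/-- Left cancellation when the first arrow is cocartesian. -/
lemma cocartCancel {E B : Type*} [Category E] [Category B] (π : E ⥤ B)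
    {d m e : E} (c : d ⟶ m) (w : m ⟶ e) (hc : IsCocartArrow π c)
    (hcw : IsCocartArrow π (c ≫ w)) : IsCocartArrow π w := by
  intro e'' t h hmap
  obtain ⟨g, ⟨hg1, hg2⟩, huniq⟩ := hcw e'' t (c ≫ h)
    (by rw [Functor.map_comp, hmap, Functor.map_comp, Category.assoc])
  refine ⟨g, ⟨hg1, ?_⟩, ?_⟩
  · -- w ≫ g = h by uniqueness of factorization through c
    obtain ⟨g', _, huniq'⟩ := hc e'' (π.map w ≫ t) (c ≫ h)
      (by rw [Functor.map_comp, hmap])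
    have e1 : w ≫ g = g' := huniq' _ ⟨by rw [Functor.map_comp, hg1],
      by rw [← Category.assoc]; exact hg2⟩
    have e2 : h = g' := huniq' _ ⟨hmap, rfl⟩
    rw [e1, ← e2]
  · intro y ⟨hy1, hy2⟩
    exact huniq y ⟨hy1, by rw [Category.assoc, hy2]⟩

/-- Isomorphisms are cocartesian. -/
lemma isoCocart {E B : Type*} [Category E] [Category B] (π : E ⥤ B)
    {x y : E} (k : x ⟶ y) (hk : IsIso k) : IsCocartArrow π k := by
  intro e'' t h hmap
  refine ⟨inv k ≫ h, ⟨?_, by simp⟩, ?_⟩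
  · simp [hmap]
  · intro y ⟨_, hy2⟩
    rw [← hy2]; simp

/-- For a bicartesian fibration with stable internal sums, left cancellation of
cocartesian arrows is equivalent to conservativity of cocartesian transport:
whenever `k` is vertical and both `f` and `k ≫ f` are cocartesian, `k` is an
isomorphism. -/
theorem stmt13 {E B : Type*} [Category E] [Category B] [HasPullbacks B]
    (π : E ⥤ B) (h₁ : HasCocartLifts π) (h₂ : HasCartLifts π)
    (stable : ∀ {d e x : E} (f : d ⟶ e) (h : x ⟶ e), IsCocartArrow π f →
      ∃ (p : E) (fst : p ⟶ d) (snd : p ⟶ x),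
        IsPullback fst snd f h ∧ IsCocartArrow π snd) :
    (∀ {d e e' : E} (f : d ⟶ e) (g : e ⟶ e'),
      IsCocartArrow π g → IsCocartArrow π (f ≫ g) → IsCocartArrow π f) ↔
    (∀ {x y z : E} (k : x ⟶ y) (f : y ⟶ z),
      IsIso (π.map k) → IsCocartArrow π f → IsCocartArrow π (k ≫ f) →
      IsIso k) := by
  constructor
  · intro cancel x y z k f hk hf hkf
    exact vertCocartIso π k hk (cancel k f hf hkf)
  · intro cons d e e' f g hg hfg
    -- factor f = c ≫ v with c cocartesian and v vertical
    obtain ⟨m, hm, c, hc1, hc2⟩ := h₁ d (π.map f)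
    obtain ⟨v, ⟨hv1, hv2⟩, _⟩ := hc2 e (eqToHom hm) f (by rw [hc1]; simp)
    have hviso : IsIso (π.map v) := by rw [hv1]; infer_instance
    -- v ≫ g is cocartesian since c ≫ (v ≫ g) = f ≫ g and c is cocartesian
    have hvg : IsCocartArrow π (v ≫ g) := by
      apply cocartCancel π c (v ≫ g) hc2
      have : c ≫ v ≫ g = f ≫ g := by rw [← Category.assoc, hv2]
      rw [this]; exact hfg
    have : IsIso v := cons v g hviso hg hvg
    -- f = c ≫ v is cocartesian
    rw [← hv2]
    intro e'' t h hmap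
    obtain ⟨g₀, ⟨hg1, hg2⟩, huniq⟩ := hc2 e'' (π.map v ≫ t) h
      (by rw [hmap, Functor.map_comp, Category.assoc])
    refine ⟨inv v ≫ g₀, ⟨?_, ?_⟩, ?_⟩
    · rw [Functor.map_comp, hg1, ← Category.assoc, ← Functor.map_comp]
      simp
    · rw [Category.assoc, ← Category.assoc v, IsIso.hom_inv_id, Category.id_comp, hg2]
    · intro y ⟨hy1, hy2⟩
      have : v ≫ y = g₀ := huniq _ ⟨by rw [Functor.map_comp, hy1],
        by rw [← Category.assoc]; exact hy2⟩
      rw [← this]; simp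
end

section
/- Fibered adjunctions restrict to fiberwise adjunctions: let π : E ⥤ B and ξ : F ⥤ B be Grothendieck opfibrations presented by strict functors P, Q : B ⥤ Cat, and suppose φ : E ⥤ F and ψ : F ⥤ E are functors over B with an adjunction ψ ⊣ φ whose unit η : 𝟭_F ⟶ ψ ⋙ φ is vertical (each component maps to an identity in B). Then for every b : B the restricted functors ψ_b : Q.obj b ⥤ P.obj b and φ_b : P.obj b ⥤ Q.obj b form an adjunction ψ_b ⊣ φ_b. -/
open CategoryTheory

namespace Stmt18Aux

variable {C : Type*} [Category C]

/-- Extract the fiber morphism from a vertical morphism in the Grothendieck construction. -/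
def vf {F : C ⥤ Cat} {c : C} {x y : F.obj c}
    (g : @Quiver.Hom (Grothendieck F) CategoryStruct.toQuiver ⟨c, x⟩ ⟨c, y⟩) (h : g.base = 𝟙 c) : x ⟶ y :=
  eqToHom (by rw [h]; simp) ≫ g.fiber

lemma vf_ι {F : C ⥤ Cat} {c : C} {x y : F.obj c} (f : x ⟶ y)
    (h : ((Grothendieck.ι F c).map f).base = 𝟙 c) :
    vf ((Grothendieck.ι F c).map f) h = f := by
  simp [vf, Grothendieck.ι]
  erw [eqToHom_trans_assoc, eqToHom_refl, Category.id_comp]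

lemma ι_vf {F : C ⥤ Cat} {c : C} {x y : F.obj c}
    (g : @Quiver.Hom (Grothendieck F) CategoryStruct.toQuiver ⟨c, x⟩ ⟨c, y⟩) (h : g.base = 𝟙 c) :
    (Grothendieck.ι F c).map (vf g h) = g := by
  apply Grothendieck.ext _ _ (by simp [h]; rfl)
  simp [vf, Grothendieck.ι]
  erw [eqToHom_trans_assoc, eqToHom_refl, Category.id_comp]

lemma vf_comp {F : C ⥤ Cat} {c : C} {x y z : F.obj c}
    (g₁ : @Quiver.Hom (Grothendieck F) CategoryStruct.toQuiver ⟨c, x⟩ ⟨c, y⟩) (g₂ : @Quiver.Hom (Grothendieck F) CategoryStruct.toQuiver ⟨c, y⟩ ⟨c, z⟩)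
    (h₁ : g₁.base = 𝟙 c) (h₂ : g₂.base = 𝟙 c) (h₃ : (g₁ ≫ g₂).base = 𝟙 c) :
    vf (g₁ ≫ g₂) h₃ = vf g₁ h₁ ≫ vf g₂ h₂ := by
  have key : (F.map g₂.base).toFunctor.map g₁.fiber =
      eqToHom (by rw [h₂]; simp) ≫ g₁.fiber ≫ eqToHom (by rw [h₂]; simp) := by
    have : F.map g₂.base = 𝟙 (F.obj c) := by rw [h₂, F.map_id]
    rw [Functor.congr_hom (congrArg Cat.Hom.toFunctor this) g₁.fiber]; simp
  simp [vf, Grothendieck.comp_fiber, key]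
  erw [eqToHom_trans_assoc, eqToHom_trans_assoc]

lemma vf_eq {F : C ⥤ Cat} {c : C} {x y : F.obj c}
    {g g' : @Quiver.Hom (Grothendieck F) CategoryStruct.toQuiver ⟨c, x⟩ ⟨c, y⟩} (e : g = g')
    {h : g.base = 𝟙 c} {h' : g'.base = 𝟙 c} : vf g h = vf g' h' := by
  subst e; rfl

lemma map_ι_map {F G : C ⥤ Cat} (α : F ⟶ G) {c : C} {x y : F.obj c} (f : x ⟶ y) :
    (Grothendieck.map α).map ((Grothendieck.ι F c).map f) =
      (Grothendieck.ι G c).map ((α.app c).toFunctor.map f) := by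
  apply Grothendieck.ext
  · simp [Grothendieck.ι, Grothendieck.map, Cat.eqToHom_app, eqToHom_map]
    erw [eqToHom_trans_assoc]
  · rfl

end Stmt18Aux

open Stmt18Aux

/-- A fibered adjunction with vertical unit between Grothendieck constructions of
strict functors `P, Q : B ⥤ Cat` restricts to fiberwise adjunctions:
if `ψ = Grothendieck.map β ⊣ Grothendieck.map α = φ` with vertical unit, then
`β.app b ⊣ α.app b` for every `b : B`. -/
theorem stmt18 {B : Type*} [Category B] (P Q : B ⥤ Cat)
    (α : P ⟶ Q) (β : Q ⟶ P)
    (adj : Grothendieck.map β ⊣ Grothendieck.map α)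
    (hvert : ∀ x : Grothendieck Q, (adj.unit.app x).base = 𝟙 x.base) :
    ∀ b : B, Nonempty
      ((β.app b).toFunctor ⊣ (α.app b).toFunctor) := by
  have hcov : ∀ e : Grothendieck P, (adj.counit.app e).base = 𝟙 e.base := by
    intro e
    have h := adj.right_triangle_components e
    have hb := congrArg Grothendieck.Hom.base h
    simp only [Grothendieck.comp_base, Grothendieck.id_base] at hb
    rw [hvert] at hb
    erw [Category.id_comp] at hb
    exact hb
  intro b
  have hfwd : ∀ (x : Q.obj b) (y : P.obj b) (f : (β.app b).toFunctor.obj x ⟶ y),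
      (adj.homEquiv ⟨b, x⟩ ⟨b, y⟩ ((Grothendieck.ι P b).map f)).base = 𝟙 b := by
    intro x y f
    erw [Adjunction.homEquiv_unit]
    simp [hvert]
    erw [Category.id_comp]
    rfl
  have hbwd : ∀ (x : Q.obj b) (y : P.obj b) (g : x ⟶ (α.app b).toFunctor.obj y),
      ((adj.homEquiv ⟨b, x⟩ ⟨b, y⟩).symm ((Grothendieck.ι Q b).map g)).base = 𝟙 b := by
    intro x y g
    erw [Adjunction.homEquiv_counit]
    simp [hcov]
    erw [Category.comp_id]
    rfl
  refine ⟨Adjunction.mkOfHomEquiv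
    { homEquiv := fun x y =>
        { toFun := fun f => vf (adj.homEquiv ⟨b, x⟩ ⟨b, y⟩ ((Grothendieck.ι P b).map f))
            (hfwd x y f)
          invFun := fun g => vf ((adj.homEquiv ⟨b, x⟩ ⟨b, y⟩).symm ((Grothendieck.ι Q b).map g))
            (hbwd x y g)
          left_inv := fun f => by
            exact (vf_eq ((congrArg (adj.homEquiv ⟨b, x⟩ ⟨b, y⟩).symm (ι_vf _ (hfwd x y f))).trans
              (Equiv.symm_apply_apply _ _))).trans (vf_ι f rfl)
          right_inv := fun g => by
            exact (vf_eq ((congrArg (adj.homEquiv ⟨b, x⟩ ⟨b, y⟩) (ι_vf _ (hbwd x y g))).trans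
              (Equiv.apply_symm_apply _ _))).trans (vf_ι g rfl) }
      homEquiv_naturality_left_symm := fun {x' x y} f g => by
        dsimp only [Equiv.coe_fn_symm_mk]
        have e1 : (adj.homEquiv ⟨b, x'⟩ ⟨b, y⟩).symm ((Grothendieck.ι Q b).map (f ≫ g)) =
            (Grothendieck.ι P b).map ((β.app b).toFunctor.map f) ≫
              (adj.homEquiv ⟨b, x⟩ ⟨b, y⟩).symm ((Grothendieck.ι Q b).map g) := by
          erw [Functor.map_comp, Adjunction.homEquiv_naturality_left_symm, map_ι_map β f]
          rfl
        erw [vf_eq e1 (h' := by erw [Grothendieck.comp_base, hbwd x y g, Category.comp_id]; rfl),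
          vf_comp _ _ (by simp) (hbwd x y g), vf_ι]
      homEquiv_naturality_right := fun {x y y'} f g => by
        dsimp only [Equiv.coe_fn_mk]
        have e1 : adj.homEquiv ⟨b, x⟩ ⟨b, y'⟩ ((Grothendieck.ι P b).map (f ≫ g)) =
            adj.homEquiv ⟨b, x⟩ ⟨b, y⟩ ((Grothendieck.ι P b).map f) ≫
              (Grothendieck.ι Q b).map ((α.app b).toFunctor.map g) := by
          erw [Functor.map_comp, Adjunction.homEquiv_naturality_right, map_ι_map α g]
          rfl
        erw [vf_eq e1 (h' := by erw [Grothendieck.comp_base, hfwd x y f, Category.id_comp]; rfl),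
          vf_comp _ _ (hfwd x y f) (by simp), vf_ι] }⟩
end
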